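/- Let A be a K×K positive semidefinite Hermitian matrix with eigenvalues λ1 ≥ λ2 ≥ … ≥ λK ≥ 0, and let F be a K×M complex matrix (M ≤ K) with tr(FᴴF) ≤ p0. Then det(FᴴAF) ≤ (p0/M)^M · ∏_{i=1}^M λ_i. -/

import Mathlib

open Matrix

section Helpers

variable {K M : ℕ}

private lemma card_image_of_inj (f : Fin M → Fin K) (hf : Function.Injective f) :
    (Finset.univ.image f).card = M := by
  rw [Finset.card_image_of_injective _ hf, Finset.card_univ, Fintype.card_fin]

private noncomputable def sortOf (f : Fin M → Fin K) (hf : Function.Injective f) :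
    Fin M → Fin K :=
  (Finset.univ.image f).orderEmbOfFin (card_image_of_inj f hf)

private lemma sortOf_strictMono (f : Fin M → Fin K) (hf : Function.Injective f) :
    StrictMono (sortOf f hf) :=
  ((Finset.univ.image f).orderEmbOfFin (card_image_of_inj f hf)).strictMono

private noncomputable def permOf (f : Fin M → Fin K) (hf : Function.Injective f) :
    Equiv.Perm (Fin M) :=
  Equiv.ofBijective
    (fun j => ((Finset.univ.image f).orderIsoOfFin (card_image_of_inj f hf)).symm
      ⟨f j, Finset.mem_image_of_mem f (Finset.mem_univ j)⟩)
    (by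
      refine (Fintype.bijective_iff_injective_and_card _).mpr ⟨fun a b hab => hf ?_, rfl⟩
      have := congrArg
        (fun x => (((Finset.univ.image f).orderIsoOfFin (card_image_of_inj f hf)) x : Fin K)) hab
      simpa using this)

private lemma sortOf_comp_permOf (f : Fin M → Fin K) (hf : Function.Injective f) :
    sortOf f hf ∘ (permOf f hf) = f := by
  funext j
  show ((Finset.univ.image f).orderEmbOfFin (card_image_of_inj f hf))
      ((permOf f hf) j) = f j
  rw [← Finset.coe_orderIsoOfFin_apply]
  show ((((Finset.univ.image f).orderIsoOfFin (card_image_of_inj f hf))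
      (((Finset.univ.image f).orderIsoOfFin (card_image_of_inj f hf)).symm
        ⟨f j, Finset.mem_image_of_mem f (Finset.mem_univ j)⟩)) : Fin K) = f j
  rw [OrderIso.apply_symm_apply]

private lemma sortOf_comp (g : Fin M → Fin K) (hg : StrictMono g) (σ : Equiv.Perm (Fin M)) :
    sortOf (g ∘ σ) (hg.injective.comp σ.injective) = g := by
  symm
  apply Finset.orderEmbOfFin_unique (card_image_of_inj _ (hg.injective.comp σ.injective)) _ hg
  intro x
  exact Finset.mem_image.mpr ⟨σ.symm x, Finset.mem_univ _, by simp⟩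

private lemma permOf_comp (g : Fin M → Fin K) (hg : StrictMono g) (σ : Equiv.Perm (Fin M)) :
    permOf (g ∘ σ) (hg.injective.comp σ.injective) = σ := by
  ext j
  have h1 := sortOf_comp_permOf (g ∘ σ) (hg.injective.comp σ.injective)
  have h2 := congrArg (fun u => u j) h1
  simp only [Function.comp_apply] at h2
  -- h2 : sortOf (g∘σ) _ (permOf (g∘σ) _ j) = g (σ j)
  rw [sortOf_comp g hg σ] at h2
  rw [hg.injective h2]

end Helpers

open Finset in
/-- Cauchy–Binet style expansion of `det (Gᴴ (diagonal w) G)` over strictly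
monotone selections of rows. -/
private lemma cb_det {K M : ℕ} (G : Matrix (Fin K) (Fin M) ℂ) (w : Fin K → ℂ) :
    (Gᴴ * (Matrix.diagonal w * G)).det
      = ∑ g ∈ Finset.univ.filter (fun g : Fin M → Fin K => StrictMono g),
          (∏ i, w (g i)) *
            ((starRingEnd ℂ) (G.submatrix g id).det * (G.submatrix g id).det) := by
  classical
  set c : Fin K → Fin M → ℂ := fun k j => (starRingEnd ℂ) (G k j) * w k with hc
  set t : (Fin M → Fin K) → ℂ :=
    fun f => (∏ j, c (f j) j) * (G.submatrix f id).det with ht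
  -- Step 1: expand by multilinearity
  have h1 : (Gᴴ * (Matrix.diagonal w * G)).det = ∑ f : Fin M → Fin K, t f := by
    have hrow : (Gᴴ * (Matrix.diagonal w * G)) = fun j => ∑ k, c k j • G k := by
      funext j j'
      simp only [Matrix.mul_apply, Matrix.conjTranspose_apply, Matrix.diagonal_apply,
        ite_mul, zero_mul, Finset.sum_ite_eq, Finset.mem_univ, if_true, Finset.sum_apply,
        Pi.smul_apply, smul_eq_mul, starRingEnd_apply, hc]
      exact Finset.sum_congr rfl fun k _ => by ring
    show Matrix.detRowAlternating (Gᴴ * (Matrix.diagonal w * G)) = _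
    rw [hrow]
    rw [show (Matrix.detRowAlternating (R := ℂ) (n := Fin M))
          (fun j => ∑ k, c k j • G k)
        = (Matrix.detRowAlternating (R := ℂ) (n := Fin M)).toMultilinearMap
          (fun j => ∑ k, c k j • G k) from rfl]
    rw [MultilinearMap.map_sum]
    refine Finset.sum_congr rfl fun f _ => ?_
    have := (Matrix.detRowAlternating (R := ℂ) (n := Fin M)).toMultilinearMap.map_smul_univ
      (fun j => c (f j) j) (fun j => G (f j))
    have h' : (G.submatrix f id).det = Matrix.detRowAlternating (fun j => G (f j)) := rfl
    simpa [ht, smul_eq_mul, h'] using this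
  rw [h1]
  -- Step 2: non-injective terms vanish
  rw [← Finset.sum_filter_add_sum_filter_not Finset.univ
      (fun f : Fin M → Fin K => Function.Injective f)]
  have h2 : ∑ f ∈ Finset.univ.filter
      (fun f : Fin M → Fin K => ¬ Function.Injective f), t f = 0 := by
    refine Finset.sum_eq_zero fun f hf => ?_
    simp only [Finset.mem_filter, Function.Injective, not_forall] at hf
    obtain ⟨i, j, hij, hne⟩ := hf.2
    have : (G.submatrix f id).det = 0 :=
      Matrix.det_zero_of_row_eq hne (by funext j'; simp [hij])
    simp [ht, this]
  rw [h2, add_zero]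
  -- Step 3: regroup injective maps as (strictly monotone) ∘ (permutation)
  have h3 : ∑ f ∈ Finset.univ.filter
        (fun f : Fin M → Fin K => Function.Injective f), t f
      = ∑ p ∈ (Finset.univ.filter (fun g : Fin M → Fin K => StrictMono g)) ×ˢ
            (Finset.univ : Finset (Equiv.Perm (Fin M))), t (p.1 ∘ p.2) := by
    have hinj : ∀ f ∈ Finset.univ.filter (fun f : Fin M → Fin K => Function.Injective f),
        Function.Injective f := fun f hf => (Finset.mem_filter.mp hf).2
    refine Finset.sum_bij'
      (fun f hf => (sortOf f (hinj f hf), permOf f (hinj f hf)))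
      (fun p hp => p.1 ∘ p.2) ?_ ?_ ?_ ?_ ?_
    · intro f hf
      refine Finset.mem_product.mpr ⟨?_, Finset.mem_univ _⟩
      simpa using sortOf_strictMono f _
    · intro p hp
      have hp1 : StrictMono p.1 := by
        have := (Finset.mem_product.mp hp).1; simpa using this
      simp only [Finset.mem_filter, Finset.mem_univ, true_and]
      exact hp1.injective.comp p.2.injective
    · intro f hf
      exact sortOf_comp_permOf f (hinj f hf)
    · intro p hp
      have hp1 : StrictMono p.1 := by
        have := (Finset.mem_product.mp hp).1; simpa using this
      have e1 := sortOf_comp p.1 hp1 p.2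
      have e2 := permOf_comp p.1 hp1 p.2
      exact Prod.ext (by simpa using e1) (by simpa using e2)
    · intro f hf
      rw [sortOf_comp_permOf f (hinj f hf)]
  rw [h3, Finset.sum_product]
  -- Step 4: sum over permutations for a fixed strictly monotone g
  refine Finset.sum_congr rfl fun g hg => ?_
  have hσ : ∀ σ : Equiv.Perm (Fin M), t (g ∘ σ)
      = (∏ i, w (g i)) *
        ((((Equiv.Perm.sign σ : ℤ) : ℂ) * ∏ j, (starRingEnd ℂ) (G (g (σ j)) j)) *
          (G.submatrix g id).det) := by
    intro σ
    have hdet : (G.submatrix (g ∘ σ) id).det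
        = ((Equiv.Perm.sign σ : ℤ) : ℂ) * (G.submatrix g id).det := by
      have : G.submatrix (g ∘ σ) id = (G.submatrix g id).submatrix σ id := by
        rw [Matrix.submatrix_submatrix]; rfl
      rw [this, Matrix.det_permute]
    have hprod : (∏ j, c ((g ∘ σ) j) j)
        = (∏ j, (starRingEnd ℂ) (G (g (σ j)) j)) * ∏ j, w (g (σ j)) := by
      simp only [hc, Function.comp_apply]
      rw [Finset.prod_mul_distrib]
    have hw : (∏ j, w (g (σ j))) = ∏ i, w (g i) := Equiv.prod_comp σ (fun i => w (g i))
    simp only [ht, hprod, hw, hdet]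
    ring
  calc ∑ σ : Equiv.Perm (Fin M), t (g ∘ σ)
      = (∏ i, w (g i)) *
        ((∑ σ : Equiv.Perm (Fin M),
          (((Equiv.Perm.sign σ : ℤ) : ℂ) * ∏ j, (starRingEnd ℂ) (G (g (σ j)) j))) *
          (G.submatrix g id).det) := by
        rw [Finset.sum_mul, Finset.mul_sum]
        exact Finset.sum_congr rfl fun σ _ => hσ σ
    _ = (∏ i, w (g i)) *
        ((starRingEnd ℂ) (G.submatrix g id).det * (G.submatrix g id).det) := by
        congr 2
        rw [RingHom.map_det, Matrix.det_apply']
        rfl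

private lemma amgm {M : ℕ} (hM : 0 < M) (μ : Fin M → ℝ) (hnn : ∀ i, 0 ≤ μ i) :
    ∏ i, μ i ≤ ((∑ i, μ i) / M) ^ M := by
  have hM' : (M : ℝ) ≠ 0 := Nat.cast_ne_zero.mpr hM.ne'
  have hw : ∑ _i : Fin M, (1 : ℝ) / M = 1 := by
    simp only [Finset.sum_const, Finset.card_univ, Fintype.card_fin, nsmul_eq_mul]
    field_simp
  have h := Real.geom_mean_le_arith_mean_weighted Finset.univ (fun _ => 1 / M) μ
    (fun i _ => by positivity) hw (fun i _ => hnn i)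
  have hL : (∏ i, μ i ^ ((1 : ℝ) / M)) ^ M = ∏ i, μ i := by
    rw [← Finset.prod_pow]
    refine Finset.prod_congr rfl fun i _ => ?_
    rw [← Real.rpow_natCast (μ i ^ ((1 : ℝ) / M)) M, ← Real.rpow_mul (hnn i)]
    rw [one_div_mul_cancel hM', Real.rpow_one]
  have hR : ∑ i, (1 : ℝ) / M * μ i = (∑ i, μ i) / M := by
    rw [Finset.sum_div]
    exact Finset.sum_congr rfl fun i _ => by ring
  calc ∏ i, μ i = (∏ i, μ i ^ ((1 : ℝ) / M)) ^ M := hL.symm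
    _ ≤ (∑ i, (1 : ℝ) / M * μ i) ^ M := by
        refine pow_le_pow_left₀ ?_ h M
        exact Finset.prod_nonneg fun i _ => Real.rpow_nonneg (hnn i) _
    _ = ((∑ i, μ i) / M) ^ M := by rw [hR]

open scoped ComplexOrder in
private lemma det_le_pow {K M : ℕ} (hM : 0 < M) (F : Matrix (Fin K) (Fin M) ℂ)
    (p0 : ℝ) (hp0 : 0 ≤ p0) (hp : (Fᴴ * F).trace.re ≤ p0) :
    (Fᴴ * F).det.re ≤ (p0 / M) ^ M := by
  set P := Fᴴ * F with hPdef
  have hP : P.PosSemidef := Matrix.posSemidef_conjTranspose_mul_self F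
  have hH := hP.isHermitian
  have hdre : P.det.re = ∏ i, hH.eigenvalues i := by
    rw [hH.det_eq_prod_eigenvalues]
    norm_cast
  have htr : P.trace.re = ∑ i, hH.eigenvalues i := by
    have h1 : P.trace = (Matrix.diagonal (RCLike.ofReal ∘ hH.eigenvalues) : Matrix (Fin M) (Fin M) ℂ).trace := by
      conv_lhs => rw [hH.spectral_theorem]
      rw [Unitary.conjStarAlgAut_apply]
      rw [Matrix.trace_mul_cycle]
      rw [show (star (hH.eigenvectorUnitary : Matrix (Fin M) (Fin M) ℂ)) *
            (hH.eigenvectorUnitary : Matrix (Fin M) (Fin M) ℂ) = 1 from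
          hH.eigenvectorUnitary.prop.1]
      rw [Matrix.one_mul]
    rw [h1, Matrix.trace_diagonal]
    simp
  have hnn : ∀ i, 0 ≤ hH.eigenvalues i := hP.eigenvalues_nonneg
  have h1 : ∏ i, hH.eigenvalues i ≤ ((∑ i, hH.eigenvalues i) / M) ^ M := amgm hM _ hnn
  have hsum : ∑ i, hH.eigenvalues i ≤ p0 := by rw [← htr]; exact hp
  have h2 : ((∑ i, hH.eigenvalues i) / M) ^ M ≤ (p0 / M) ^ M := by
    have hMpos : (0 : ℝ) < M := Nat.cast_pos.mpr hM
    refine pow_le_pow_left₀ ?_ ?_ M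
    · have : (0:ℝ) ≤ ∑ i, hH.eigenvalues i := Finset.sum_nonneg fun i _ => hnn i
      positivity
    · gcongr
  rw [hdre]
  exact h1.trans h2

private lemma strictMono_ge {K M : ℕ} (hMK : M ≤ K) (g : Fin M → Fin K)
    (hg : StrictMono g) (i : Fin M) : Fin.castLE hMK i ≤ g i := by
  have key : ∀ n : ℕ, ∀ h : n < M, n ≤ (g ⟨n, h⟩ : Fin K).val := by
    intro n
    induction n with
    | zero => intro h; exact Nat.zero_le _
    | succ n ih =>
      intro h
      have h' : n < M := Nat.lt_of_succ_lt h
      have h1 := ih h'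
      have h2 : g ⟨n, h'⟩ < g ⟨n + 1, h⟩ := hg (by simp [Fin.lt_def])
      have := Fin.lt_def.mp h2
      omega
  have := key i.val i.isLt
  rw [Fin.le_def]
  simpa using this

/-- Power-constrained bound on the geometric SNR:
`det(FᴴAF) ≤ (p0/M)^M ∏_{i=1}^M λ_i` for any `F` with `tr(FᴴF) ≤ p0`. -/
theorem stmt7 (K M : ℕ) (hM : 0 < M) (hMK : M ≤ K) (p0 : ℝ) (hp0 : 0 < p0)
    (V : Matrix (Fin K) (Fin K) ℂ) (hV : Vᴴ * V = 1)
    (lam : Fin K → ℝ) (hmono : ∀ i j : Fin K, i ≤ j → lam j ≤ lam i)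
    (hnn : ∀ i, 0 ≤ lam i)
    (A : Matrix (Fin K) (Fin K) ℂ)
    (hA : A = V * Matrix.diagonal (fun i => (lam i : ℂ)) * Vᴴ)
    (F : Matrix (Fin K) (Fin M) ℂ)
    (hpow : (Fᴴ * F).trace.re ≤ p0) :
    (Fᴴ * A * F).det.re ≤ (p0 / M) ^ M * ∏ i : Fin M, lam (Fin.castLE hMK i) := by
  classical
  set G : Matrix (Fin K) (Fin M) ℂ := Vᴴ * F with hG
  have hVV : V * Vᴴ = 1 := mul_eq_one_comm.mp hV
  have hAF : Fᴴ * A * F = Gᴴ * (Matrix.diagonal (fun i => (lam i : ℂ)) * G) := by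
    rw [hA, hG, Matrix.conjTranspose_mul, Matrix.conjTranspose_conjTranspose]
    simp only [Matrix.mul_assoc]
  have hFF : Fᴴ * F = Gᴴ * (Matrix.diagonal (fun _ : Fin K => (1 : ℂ)) * G) := by
    rw [Matrix.diagonal_one, Matrix.one_mul, hG, Matrix.conjTranspose_mul,
      Matrix.conjTranspose_conjTranspose, Matrix.mul_assoc, ← Matrix.mul_assoc V, hVV,
      Matrix.one_mul]
  set monos := Finset.univ.filter (fun g : Fin M → Fin K => StrictMono g) with hmonos
  set nsq : (Fin M → Fin K) → ℝ := fun g => Complex.normSq (G.submatrix g id).det with hnsq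
  have hcd : ∀ g, (starRingEnd ℂ) (G.submatrix g id).det * (G.submatrix g id).det
      = ((nsq g : ℝ) : ℂ) := by
    intro g
    rw [mul_comm, Complex.mul_conj]
  -- real part of the main determinant
  have hre1 : (Fᴴ * A * F).det.re = ∑ g ∈ monos, (∏ i, lam (g i)) * nsq g := by
    rw [hAF, cb_det]
    rw [show ∑ g ∈ monos, (∏ i, (lam (g i) : ℂ)) *
        ((starRingEnd ℂ) (G.submatrix g id).det * (G.submatrix g id).det)
      = ((∑ g ∈ monos, (∏ i, lam (g i)) * nsq g : ℝ) : ℂ) by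
        rw [Complex.ofReal_sum]
        refine Finset.sum_congr rfl fun g _ => ?_
        rw [hcd g, Complex.ofReal_mul, Complex.ofReal_prod]]
    exact Complex.ofReal_re _
  have hre2 : (Fᴴ * F).det.re = ∑ g ∈ monos, nsq g := by
    rw [hFF, cb_det]
    rw [show ∑ g ∈ monos, (∏ _i : Fin M, (1 : ℂ)) *
        ((starRingEnd ℂ) (G.submatrix g id).det * (G.submatrix g id).det)
      = ((∑ g ∈ monos, nsq g : ℝ) : ℂ) by
        rw [Complex.ofReal_sum]
        refine Finset.sum_congr rfl fun g _ => ?_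
        rw [hcd g]; simp]
    exact Complex.ofReal_re _
  have hdetFF : (Fᴴ * F).det.re ≤ (p0 / M) ^ M :=
    det_le_pow hM F p0 hp0.le hpow
  have htop : (0 : ℝ) ≤ ∏ i : Fin M, lam (Fin.castLE hMK i) :=
    Finset.prod_nonneg fun i _ => hnn _
  calc (Fᴴ * A * F).det.re = ∑ g ∈ monos, (∏ i, lam (g i)) * nsq g := hre1
    _ ≤ ∑ g ∈ monos, (∏ i : Fin M, lam (Fin.castLE hMK i)) * nsq g := by
        refine Finset.sum_le_sum fun g hg => ?_
        have hgm : StrictMono g := by simpa [hmonos] using hg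
        refine mul_le_mul_of_nonneg_right ?_ (Complex.normSq_nonneg _)
        refine Finset.prod_le_prod (fun i _ => hnn _) fun i _ => ?_
        exact hmono _ _ (strictMono_ge hMK g hgm i)
    _ = (∏ i : Fin M, lam (Fin.castLE hMK i)) * ∑ g ∈ monos, nsq g := by
        rw [Finset.mul_sum]
    _ = (∏ i : Fin M, lam (Fin.castLE hMK i)) * (Fᴴ * F).det.re := by rw [hre2]
    _ ≤ (∏ i : Fin M, lam (Fin.castLE hMK i)) * (p0 / M) ^ M :=
        mul_le_mul_of_nonneg_left hdetFF htop
    _ = (p0 / M) ^ M * ∏ i : Fin M, lam (Fin.castLE hMK i) := mul_comm _ _
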